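/- Let p be a probability distribution on a finite set P, let w : P → ℝ be nonnegative, and let η > 0. Then the mixability gap satisfies ∑_{k∈P} p(k)w(k) + (1/η)·log(∑_{k∈P} p(k)·exp(-η·w(k))) ≤ (η/2)·∑_{k∈P} p(k)·w(k)². -/

import Mathlib

open Finset

lemma exp_neg_le_quad {y : ℝ} (hy : 0 ≤ y) :
    Real.exp (-y) ≤ 1 - y + y ^ 2 / 2 := by
  have hderiv : ∀ x : ℝ, HasDerivAt (fun x => 1 - x + x ^ 2 / 2 - Real.exp (-x))
      (-1 + x + Real.exp (-x)) x := by
    intro x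
    have h1 : HasDerivAt (fun x : ℝ => Real.exp (-x)) (-Real.exp (-x)) x := by
      simpa [Function.comp_def] using (Real.hasDerivAt_exp (-x)).comp x (hasDerivAt_neg x)
    have h2 : HasDerivAt (fun x : ℝ => 1 - x + x ^ 2 / 2) (-1 + x) x := by
      have := ((hasDerivAt_id x).const_sub 1).add ((hasDerivAt_pow 2 x).div_const 2)
      exact this.congr_deriv (by norm_num)
    exact (h2.sub h1).congr_deriv (by ring)
  have hmono : MonotoneOn (fun x => 1 - x + x ^ 2 / 2 - Real.exp (-x)) (Set.Ici (0:ℝ)) := by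
    apply monotoneOn_of_deriv_nonneg (convex_Ici 0)
    · exact Continuous.continuousOn (by fun_prop)
    · intro x _; exact (hderiv x).differentiableAt.differentiableWithinAt
    · intro x hx
      rw [(hderiv x).deriv]
      nlinarith [Real.one_sub_le_exp_neg x]
  have h2 := hmono Set.self_mem_Ici (Set.mem_Ici.2 hy) hy
  simp at h2
  linarith

theorem mixability_gap_bound
    {ι : Type*} [Fintype ι] [Nonempty ι]
    (p : ι → ℝ) (hp : ∀ k, 0 ≤ p k) (hpsum : ∑ k, p k = 1)
    (w : ι → ℝ) (hw : ∀ k, 0 ≤ w k)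
    (η : ℝ) (hη : 0 < η) :
    ∑ k, p k * w k + (1 / η) * Real.log (∑ k, p k * Real.exp (-η * w k)) ≤
      (η / 2) * ∑ k, p k * (w k) ^ 2 := by
  set S := ∑ k, p k * Real.exp (-η * w k) with hS
  have hSpos : 0 < S := by
    obtain ⟨k, hk⟩ : ∃ k, 0 < p k := by
      by_contra h
      push_neg at h
      have : ∑ k, p k = 0 := Finset.sum_eq_zero fun k _ => le_antisymm (h k) (hp k)
      rw [hpsum] at this; norm_num at this
    have : 0 < p k * Real.exp (-η * w k) := mul_pos hk (Real.exp_pos _)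
    rw [hS]
    exact lt_of_lt_of_le this (Finset.single_le_sum (f := fun i => p i * Real.exp (-η * w i)) (fun i _ => mul_nonneg (hp i) (Real.exp_pos _).le) (Finset.mem_univ k))
  have hlog : Real.log S ≤ S - 1 := Real.log_le_sub_one_of_pos hSpos
  have hSle : S ≤ 1 - η * ∑ k, p k * w k + η ^ 2 / 2 * ∑ k, p k * (w k) ^ 2 := by
    have : S ≤ ∑ k, p k * (1 - η * w k + (η * w k) ^ 2 / 2) := by
      apply Finset.sum_le_sum
      intro k _
      apply mul_le_mul_of_nonneg_left _ (hp k)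
      have := exp_neg_le_quad (mul_nonneg hη.le (hw k))
      simpa [neg_mul] using this
    calc S ≤ _ := this
      _ = ∑ k, p k - η * ∑ k, p k * w k + η ^ 2 / 2 * ∑ k, p k * (w k) ^ 2 := by
        rw [Finset.mul_sum, Finset.mul_sum, ← Finset.sum_sub_distrib, ← Finset.sum_add_distrib]
        exact Finset.sum_congr rfl fun k _ => by ring
      _ = 1 - η * ∑ k, p k * w k + η ^ 2 / 2 * ∑ k, p k * (w k) ^ 2 := by rw [hpsum]
  have hlog2 : Real.log S ≤ -η * ∑ k, p k * w k + η ^ 2 / 2 * ∑ k, p k * (w k) ^ 2 := by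
    linarith
  have := mul_le_mul_of_nonneg_left hlog2 (by positivity : (0:ℝ) ≤ 1/η)
  have hη' : η ≠ 0 := hη.ne'
  rw [mul_add, ← mul_assoc, ← mul_assoc] at this
  have e1 : 1 / η * -η = -1 := by field_simp
  have e2 : 1 / η * (η ^ 2 / 2) = η / 2 := by field_simp
  rw [e1, e2] at this
  linarith
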